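/- For every α ∈ (0,1) there exist ε₀ > 0 and n₀ such that for every ε ∈ (0,ε₀] the following holds: if D is a directed graph on 2n ≥ 2n₀ vertices with δ⁰(D) ≥ (1 − ε)n and D is not α-extremal, then for every ordered pair (x,y) of distinct vertices of D, the number of (x,y)-absorbers is at least α¹²·n⁴ and the number of (x,y)-connectors is at least α³·n². -/

import Mathlib

noncomputable def outDeg {V : Type*} (E : V → V → Prop) (v : V) : ℕ := {w | E v w}.ncard
noncomputable def inDeg {V : Type*} (E : V → V → Prop) (v : V) : ℕ := {w | E w v}.ncard

/-- A digraph on `N` vertices is `α`-extremal. -/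
def AlphaExtremal (α : ℝ) {V : Type*} (E : V → V → Prop) : Prop :=
  ∃ A B : Set V,
    (1 - α) * (Nat.card V : ℝ) / 2 ≤ (A.ncard : ℝ) ∧
    (A.ncard : ℝ) ≤ (1 + α) * (Nat.card V : ℝ) / 2 ∧
    (1 - α) * (Nat.card V : ℝ) / 2 ≤ (B.ncard : ℝ) ∧
    (B.ncard : ℝ) ≤ (1 + α) * (Nat.card V : ℝ) / 2 ∧
    (∀ a ∈ A, ({b ∈ B | E a b}.ncard : ℝ) ≤ α * (Nat.card V : ℝ) / 2) ∧
    (∀ b ∈ B, ({a ∈ A | E a b}.ncard : ℝ) ≤ α * (Nat.card V : ℝ) / 2)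

/-- `(a,b)` is an `(x,y)`-connector: `a,b,x,y` are distinct and
`x a b y` is an anti-directed path containing the edge `(a,b)`. -/
def IsConnector {V : Type*} (E : V → V → Prop) (x y a b : V) : Prop :=
  ([a, b, x, y] : List V).Pairwise (· ≠ ·) ∧ E a x ∧ E a b ∧ E y b

/-- `(a,b,c,d)` is an `(x,y)`-absorber. -/
def IsAbsorber {V : Type*} (E : V → V → Prop) (x y a b c d : V) : Prop :=
  ([a, b, c, d, x, y] : List V).Pairwise (· ≠ ·) ∧
    E a b ∧ E c b ∧ E c d ∧ E a x ∧ E c x ∧ E y b ∧ E y d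

set_option linter.unusedSectionVars false
set_option linter.deprecated false

open Finset

section Aux

variable {V : Type} [Fintype V] [DecidableEq V]

lemma ncard_filter_eq (P : V → Prop) [DecidablePred P] :
    {w | P w}.ncard = (univ.filter P).card := by
  rw [show {w | P w} = ↑(univ.filter P) by ext w; simp, Set.ncard_coe_finset]

variable (E : V → V → Prop) [DecidableRel E]

lemma edge_sum_fst (A B : Finset V) :
    ((A ×ˢ B).filter fun p => E p.1 p.2).card
      = ∑ a ∈ A, (B.filter fun b => E a b).card := by
  simp only [Finset.card_filter, Finset.sum_product]

lemma edge_sum_snd (A B : Finset V) :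
    ((A ×ˢ B).filter fun p => E p.1 p.2).card
      = ∑ b ∈ B, (A.filter fun a => E a b).card := by
  simp only [Finset.card_filter, Finset.sum_product]
  exact Finset.sum_comm

lemma build_extremal {α : ℝ} {n : ℕ} (hα0 : 0 < α)
    (hcard : Nat.card V = 2 * n)
    (A B : Finset V)
    (hA : (1 - α) * n ≤ (A.card : ℝ)) (hB : (1 - α) * n ≤ (B.card : ℝ))
    (hdA : ∀ a ∈ A, ((B.filter fun b => E a b).card : ℝ) ≤ α * n)
    (hdB : ∀ b ∈ B, ((A.filter fun a => E a b).card : ℝ) ≤ α * n) :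
    AlphaExtremal α E := by
  obtain ⟨A', hA'sub, hA'card⟩ := Finset.exists_subset_card_eq (s := A) (n := min A.card n) (min_le_left _ _)
  obtain ⟨B', hB'sub, hB'card⟩ := Finset.exists_subset_card_eq (s := B) (n := min B.card n) (min_le_left _ _)
  have hN : (Nat.card V : ℝ) = 2 * n := by exact_mod_cast hcard
  have h2 : (Nat.card V : ℝ) / 2 = n := by rw [hN]; ring
  have hlo : ∀ (s : Finset V), (1 - α) * n ≤ (s.card : ℝ) →
      (1 - α) * n ≤ (min s.card n : ℕ) ∧ ((min s.card n : ℕ) : ℝ) ≤ (1 + α) * n := by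
    intro s hs
    constructor
    · rcases min_cases s.card n with ⟨h, _⟩ | ⟨h, hle⟩
      · rw [h]; exact hs
      · rw [h]
        nlinarith [(Nat.cast_nonneg n : (0:ℝ) ≤ n)]
    · have : (min s.card n : ℕ) ≤ n := min_le_right _ _
      have : ((min s.card n : ℕ) : ℝ) ≤ n := by exact_mod_cast this
      nlinarith [(Nat.cast_nonneg n : (0:ℝ) ≤ n)]
  refine ⟨(↑A' : Set V), (↑B' : Set V), ?_, ?_, ?_, ?_, ?_, ?_⟩
  · rw [Set.ncard_coe_finset, hA'card]
    rw [show (1 - α) * (Nat.card V : ℝ) / 2 = (1-α) * n by rw [hN]; ring]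
    exact (hlo A hA).1
  · rw [Set.ncard_coe_finset, hA'card]
    rw [show (1 + α) * (Nat.card V : ℝ) / 2 = (1+α) * n by rw [hN]; ring]
    exact (hlo A hA).2
  · rw [Set.ncard_coe_finset, hB'card]
    rw [show (1 - α) * (Nat.card V : ℝ) / 2 = (1-α) * n by rw [hN]; ring]
    exact (hlo B hB).1
  · rw [Set.ncard_coe_finset, hB'card]
    rw [show (1 + α) * (Nat.card V : ℝ) / 2 = (1+α) * n by rw [hN]; ring]
    exact (hlo B hB).2
  · intro a ha
    rw [show {b ∈ (↑B' : Set V) | E a b} = ↑(B'.filter fun b => E a b) by ext w; simp]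
    rw [Set.ncard_coe_finset]
    rw [show α * (Nat.card V : ℝ) / 2 = α * n by rw [hN]; ring]
    calc ((B'.filter fun b => E a b).card : ℝ)
        ≤ ((B.filter fun b => E a b).card : ℝ) := by
          exact_mod_cast Finset.card_le_card (Finset.filter_subset_filter _ hB'sub)
      _ ≤ α * n := hdA a (hA'sub ha)
  · intro b hb
    rw [show {a ∈ (↑A' : Set V) | E a b} = ↑(A'.filter fun a => E a b) by ext w; simp]
    rw [Set.ncard_coe_finset]
    rw [show α * (Nat.card V : ℝ) / 2 = α * n by rw [hN]; ring]
    calc ((A'.filter fun a => E a b).card : ℝ)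
        ≤ ((A.filter fun a => E a b).card : ℝ) := by
          exact_mod_cast Finset.card_le_card (Finset.filter_subset_filter _ hA'sub)
      _ ≤ α * n := hdB b (hB'sub hb)

lemma always_extremal {α : ℝ} {n : ℕ} (hα : 1/2 < α) (hα1 : α < 1)
    (hcard : Nat.card V = 2 * n) (hn : 1 ≤ (2*α - 1) * n) :
    AlphaExtremal α E := by
  have hn1 : 1 ≤ (n : ℝ) := by nlinarith
  have hs2n : (⌈(1 - α) * n⌉₊ : ℝ) ≤ 2 * n := by
    have := Nat.ceil_lt_add_one (by nlinarith : (0:ℝ) ≤ (1 - α) * n)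
    nlinarith
  have hcard' : Fintype.card V = 2 * n := by rw [← Nat.card_eq_fintype_card]; exact hcard
  have hsle : ⌈(1 - α) * (n:ℝ)⌉₊ ≤ (univ : Finset V).card := by
    rw [Finset.card_univ, hcard']
    have : ((2 * n : ℕ) : ℝ) = 2 * (n:ℝ) := by push_cast; ring
    exact_mod_cast hs2n.trans_eq this.symm
  obtain ⟨S, _, hScard⟩ := Finset.exists_subset_card_eq hsle
  have hSlo : (1 - α) * n ≤ (S.card : ℝ) := by rw [hScard]; exact Nat.le_ceil _
  have hSup : (S.card : ℝ) ≤ α * n := by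
    rw [hScard]
    have := Nat.ceil_lt_add_one (by nlinarith : (0:ℝ) ≤ (1 - α) * n)
    nlinarith
  exact build_extremal E (by linarith) hcard S S hSlo hSlo
    (fun a _ => le_trans (by exact_mod_cast Finset.card_le_card (Finset.filter_subset _ _)) hSup)
    (fun b _ => le_trans (by exact_mod_cast Finset.card_le_card (Finset.filter_subset _ _)) hSup)

lemma extremal_flip {α : ℝ} (h : AlphaExtremal α (fun a b => E b a)) : AlphaExtremal α E := by
  obtain ⟨A, B, h1, h2, h3, h4, h5, h6⟩ := h
  exact ⟨B, A, h3, h4, h1, h2, fun a ha => h6 a ha, fun b hb => h5 b hb⟩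

end Aux

section Aux2

variable {V : Type} [Fintype V] [DecidableEq V] (E : V → V → Prop) [DecidableRel E]

-- real-cast sum bound helper
lemma sum_card_lower {ι : Type*} (s : Finset ι) (f : ι → ℕ) (m : ℝ)
    (h : ∀ v ∈ s, m ≤ (f v : ℝ)) : (s.card : ℝ) * m ≤ ((∑ v ∈ s, f v : ℕ) : ℝ) := by
  push_cast
  calc (s.card : ℝ) * m = ∑ _v ∈ s, m := by rw [Finset.sum_const, nsmul_eq_mul]
    _ ≤ ∑ v ∈ s, (f v : ℝ) := Finset.sum_le_sum h

lemma sum_card_upper {ι : Type*} (s : Finset ι) (f : ι → ℕ) (m : ℝ)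
    (h : ∀ v ∈ s, (f v : ℝ) ≤ m) : ((∑ v ∈ s, f v : ℕ) : ℝ) ≤ (s.card : ℝ) * m := by
  push_cast
  calc ∑ v ∈ s, (f v : ℝ) ≤ ∑ _v ∈ s, m := Finset.sum_le_sum h
    _ = (s.card : ℝ) * m := by rw [Finset.sum_const, nsmul_eq_mul]


lemma fb_arith {α ε N : ℝ} (hα0 : 0 < α) (hα2 : α ≤ 1/2) (hε0 : 0 ≤ ε) (hε : ε ≤ α/8)
    (hn : 40 ≤ α^3 * N) (hN0 : 0 < N)
    (key : ((1 - ε) * N - (1 - α) * N) * (α * N) < ((1 - α) * N + 1) * (α^3 * N)) : False := by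
  have hx0 : (0:ℝ) < α^3 * N := by positivity
  have hq : α^3 * N ≤ (α^3*N)^2 / 40 := by nlinarith
  have hα2' : α^2 ≤ 1/4 := by nlinarith
  have hα4 : α^4 ≤ 1/16 := by nlinarith [sq_nonneg (α^2 - 1/4), pow_pos hα0 2]
  have ht0 : (0:ℝ) < α^2 * N^2 := by positivity
  have h4 : α^4 * (α^2*N^2) ≤ (1/16) * (α^2*N^2) := mul_le_mul_of_nonneg_right hα4 ht0.le
  have hq2 : (α^3*N)^2 = α^4 * (α^2 * N^2) := by ring
  have hq3 : α^3 * N ≤ (α^2 * N^2) / 640 := by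
    have h5 : (α^3*N)^2/40 ≤ (α^2*N^2)/640 := by rw [hq2]; linarith
    linarith
  have hL : (7/8)*(α^2*N^2) ≤ ((1 - ε) * N - (1 - α) * N) * (α * N) := by
    nlinarith [mul_nonneg (mul_nonneg (by linarith : (0:ℝ) ≤ α/8 - ε) hα0.le) (sq_nonneg N)]
  have hR : ((1 - α) * N + 1) * (α^3 * N) ≤ (1/2)*(α^2*N^2) + (α^2*N^2)/640 := by
    have ha3 : (0:ℝ) ≤ α^3 * N^2 := by positivity
    have h6 : (1 - α) * N * (α^3 * N) ≤ α^3 * N^2 := by nlinarith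
    have h7 : α^3 * N^2 ≤ (1/2)*(α^2*N^2) := by nlinarith [mul_nonneg (sq_nonneg α) (sq_nonneg N)]
    nlinarith
  linarith

lemma many_edges {α : ℝ} {n : ℕ} (hα0 : 0 < α)
    (hcard : Nat.card V = 2 * n) (hne : ¬ AlphaExtremal α E)
    (A B : Finset V) (m : ℝ) (hmA : m ≤ (A.card : ℝ)) (hmB : m ≤ (B.card : ℝ)) :
    (m - (1 - α) * n) * (α * n) ≤ (((A ×ˢ B).filter fun p => E p.1 p.2).card : ℝ) := by
  have hαn : (0:ℝ) ≤ α * n := by positivity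
  set A1 := A.filter (fun a => ((B.filter fun b => E a b).card : ℝ) ≤ α * n) with hA1def
  by_cases h1 : (1 - α) * (n:ℝ) ≤ A1.card
  · set B1 := B.filter (fun b => ((A1.filter fun a => E a b).card : ℝ) ≤ α * n) with hB1def
    by_cases h2 : (1 - α) * (n:ℝ) ≤ B1.card
    · exfalso
      apply hne
      apply build_extremal E hα0 hcard A1 B1 h1 h2
      · intro a ha
        have : ((B1.filter fun b => E a b).card : ℝ) ≤ ((B.filter fun b => E a b).card : ℝ) := by
          exact_mod_cast Finset.card_le_card
            (Finset.filter_subset_filter _ (Finset.filter_subset _ _))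
        exact this.trans (Finset.mem_filter.mp ha).2
      · intro b hb
        exact (Finset.mem_filter.mp hb).2
    · -- many vertices in B \ B1, each with > αn in-neighbours in A1 ⊆ A
      push_neg at h2
      have hsub : B \ B1 ⊆ B := Finset.sdiff_subset
      have hcount : ∀ b ∈ B \ B1, α * n ≤ ((A.filter fun a => E a b).card : ℝ) := by
        intro b hb
        have hbB : b ∈ B := (Finset.mem_sdiff.mp hb).1
        have hbn : b ∉ B1 := (Finset.mem_sdiff.mp hb).2
        have : ¬ ((A1.filter fun a => E a b).card : ℝ) ≤ α * n := by
          intro hc; exact hbn (Finset.mem_filter.mpr ⟨hbB, hc⟩)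
        push_neg at this
        refine this.le.trans ?_
        exact_mod_cast Finset.card_le_card
          (Finset.filter_subset_filter _ (Finset.filter_subset _ _))
      have hEd : (((B \ B1).card : ℝ)) * (α * n) ≤
          (((A ×ˢ B).filter fun p => E p.1 p.2).card : ℝ) := by
        rw [edge_sum_snd]
        calc ((B \ B1).card : ℝ) * (α * n)
            ≤ ((∑ b ∈ B \ B1, (A.filter fun a => E a b).card : ℕ) : ℝ) :=
              sum_card_lower _ _ _ hcount
          _ ≤ _ := by
              exact_mod_cast Finset.sum_le_sum_of_subset hsub
      refine le_trans ?_ hEd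
      apply mul_le_mul_of_nonneg_right _ hαn
      have : ((B \ B1).card : ℝ) = (B.card : ℝ) - B1.card := by
        rw [Finset.cast_card_sdiff (Finset.filter_subset _ _)]
      rw [this]
      linarith
  · push_neg at h1
    have hsub : A \ A1 ⊆ A := Finset.sdiff_subset
    have hcount : ∀ a ∈ A \ A1, α * n ≤ ((B.filter fun b => E a b).card : ℝ) := by
      intro a ha
      have haA : a ∈ A := (Finset.mem_sdiff.mp ha).1
      have han : a ∉ A1 := (Finset.mem_sdiff.mp ha).2
      have : ¬ ((B.filter fun b => E a b).card : ℝ) ≤ α * n := by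
        intro hc; exact han (Finset.mem_filter.mpr ⟨haA, hc⟩)
      push_neg at this
      exact this.le
    have hEd : (((A \ A1).card : ℝ)) * (α * n) ≤
        (((A ×ˢ B).filter fun p => E p.1 p.2).card : ℝ) := by
      rw [edge_sum_fst]
      calc ((A \ A1).card : ℝ) * (α * n)
          ≤ ((∑ a ∈ A \ A1, (B.filter fun b => E a b).card : ℕ) : ℝ) :=
            sum_card_lower _ _ _ hcount
        _ ≤ _ := by
            exact_mod_cast Finset.sum_le_sum_of_subset hsub
    refine le_trans ?_ hEd
    apply mul_le_mul_of_nonneg_right _ hαn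
    have : ((A \ A1).card : ℝ) = (A.card : ℝ) - A1.card := by
      rw [Finset.cast_card_sdiff (Finset.filter_subset _ _)]
    rw [this]
    linarith

lemma few_bad {α ε : ℝ} {n : ℕ} (hα0 : 0 < α) (hα2 : α ≤ 1/2)
    (hε0 : 0 ≤ ε) (hε : ε ≤ α/8) (hn : 40 ≤ α^3 * n)
    (hcard : Nat.card V = 2 * n) (hne : ¬ AlphaExtremal α E)
    (B0 : Finset V) (hB0 : (1 - ε) * n ≤ (B0.card : ℝ)) :
    ((univ.filter fun c => ((B0.filter fun b => E c b).card : ℝ) ≤ α^3 * n).card : ℝ)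
      < (1 - α) * n := by
  have hn0 : (0:ℝ) < n := by nlinarith [pow_pos hα0 3]
  by_contra hcon
  push_neg at hcon
  set Cb := univ.filter fun c => ((B0.filter fun b => E c b).card : ℝ) ≤ α^3 * n with hCbdef
  have hceil : ⌈(1 - α) * (n:ℝ)⌉₊ ≤ Cb.card := Nat.ceil_le.mpr hcon
  obtain ⟨C', hC'sub, hC'card⟩ := Finset.exists_subset_card_eq hceil
  have hC'lo : (1 - α) * n ≤ (C'.card : ℝ) := by rw [hC'card]; exact Nat.le_ceil _
  have hC'up : (C'.card : ℝ) < (1 - α) * n + 1 := by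
    rw [hC'card]
    exact Nat.ceil_lt_add_one (by nlinarith)
  set B1 := B0.filter (fun b => ((C'.filter fun a => E a b).card : ℝ) ≤ α * n) with hB1def
  by_cases h2 : (1 - α) * (n:ℝ) ≤ B1.card
  · apply hne
    apply build_extremal E hα0 hcard C' B1 hC'lo h2
    · intro c hc
      have hcCb : c ∈ Cb := hC'sub hc
      have hc1 : ((B0.filter fun b => E c b).card : ℝ) ≤ α^3 * n :=
        (Finset.mem_filter.mp hcCb).2
      have : ((B1.filter fun b => E c b).card : ℝ) ≤ ((B0.filter fun b => E c b).card : ℝ) := by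
        exact_mod_cast Finset.card_le_card
          (Finset.filter_subset_filter _ (Finset.filter_subset _ _))
      refine (this.trans hc1).trans ?_
      have h3 : α^3 ≤ α := by nlinarith [sq_nonneg α]
      have : (0:ℝ) < n := by nlinarith [pow_pos hα0 3]
      nlinarith
    · intro b hb
      exact (Finset.mem_filter.mp hb).2
  · push_neg at h2
    set Ed := ((C' ×ˢ B0).filter fun p => E p.1 p.2) with hEddef
    have hupper : (Ed.card : ℝ) ≤ (C'.card : ℝ) * (α^3 * n) := by
      rw [hEddef, edge_sum_fst]
      apply sum_card_upper
      intro c hc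
      exact (Finset.mem_filter.mp (hC'sub hc)).2
    have hlower : ((B0.card : ℝ) - B1.card) * (α * n) ≤ (Ed.card : ℝ) := by
      rw [hEddef, edge_sum_snd]
      have hcount : ∀ b ∈ B0 \ B1, α * n ≤ ((C'.filter fun a => E a b).card : ℝ) := by
        intro b hb
        have hbB : b ∈ B0 := (Finset.mem_sdiff.mp hb).1
        have hbn : b ∉ B1 := (Finset.mem_sdiff.mp hb).2
        have : ¬ ((C'.filter fun a => E a b).card : ℝ) ≤ α * n := by
          intro hc; exact hbn (Finset.mem_filter.mpr ⟨hbB, hc⟩)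
        push_neg at this
        exact this.le
      calc ((B0.card :ℝ) - B1.card) * (α * n)
          = ((B0 \ B1).card : ℝ) * (α * n) := by
            rw [Finset.cast_card_sdiff (Finset.filter_subset _ _)]
        _ ≤ ((∑ b ∈ B0 \ B1, (C'.filter fun a => E a b).card : ℕ) : ℝ) :=
            sum_card_lower _ _ _ hcount
        _ ≤ _ := by exact_mod_cast Finset.sum_le_sum_of_subset Finset.sdiff_subset
    -- numeric contradiction
    have key : ((1 - ε) * n - (1 - α) * n) * (α * n) < ((1 - α) * n + 1) * (α^3 * n) := by
      have h3 : ((B0.card : ℝ) - B1.card) * (α * n) ≤ (C'.card : ℝ) * (α^3*n) :=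
        hlower.trans hupper
      have hαn : (0:ℝ) < α * n := by positivity
      have hα3n : (0:ℝ) < α^3 * n := by positivity
      calc ((1 - ε) * n - (1 - α) * n) * (α * n)
          ≤ ((B0.card : ℝ) - B1.card) * (α * n) := by
            apply mul_le_mul_of_nonneg_right _ hαn.le
            linarith
        _ ≤ (C'.card : ℝ) * (α^3*n) := h3
        _ < ((1 - α) * n + 1) * (α^3 * n) := by
            apply mul_lt_mul_of_pos_right hC'up hα3n
    exact fb_arith hα0 hα2 hε0 hε hn hn0 key
end Aux2

section Aux3

lemma pairwise4 {V : Type*} {a b x y : V} (h1 : a≠b) (h2 : a≠x) (h3 : a≠y)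
    (h4 : b≠x) (h5 : b≠y) (h6 : x≠y) : ([a,b,x,y] : List V).Pairwise (· ≠ ·) := by
  simp [List.pairwise_cons]; tauto

lemma pairwise6 {V : Type*} {a b c d x y : V}
    (h1 : a≠b) (h2 : a≠c) (h3 : a≠d) (h4 : a≠x) (h5 : a≠y)
    (h6 : b≠c) (h7 : b≠d) (h8 : b≠x) (h9 : b≠y)
    (h10 : c≠d) (h11 : c≠x) (h12 : c≠y)
    (h13 : d≠x) (h14 : d≠y) (h15 : x≠y) :
    ([a,b,c,d,x,y] : List V).Pairwise (· ≠ ·) := by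
  simp [List.pairwise_cons]; tauto

lemma conn_arith {α ε N : ℝ} (hα0 : 0 < α) (hα2 : α ≤ 1/2) (hε : ε ≤ α/8)
    (hn : 40 ≤ α^3 * N) (hN0 : 0 < N) :
    α^3 * N^2 ≤ ((1 - ε) * N - 2 - (1 - α) * N) * (α * N) := by
  have h2 : (2:ℝ) ≤ α * N / 20 := by nlinarith [sq_nonneg α, mul_pos hα0 hN0]
  have h1 : (33/40) * (α*N) ≤ (1 - ε) * N - 2 - (1 - α) * N := by nlinarith
  have hαN : (0:ℝ) < α * N := mul_pos hα0 hN0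
  calc α^3 * N^2 ≤ (33/40) * (α*N) * (α*N) := by nlinarith [mul_pos hαN hαN]
    _ ≤ ((1 - ε) * N - 2 - (1 - α) * N) * (α * N) :=
        mul_le_mul_of_nonneg_right h1 hαN.le

lemma abs_arith {α ε N L K : ℝ} (hα0 : 0 < α) (hα2 : α ≤ 1/2) (hε : ε ≤ α/8)
    (hn : 40 ≤ α^3 * N) (hN0 : 0 < N)
    (hL : ((1 - ε) * N - 2 - (1 - α) * N) * (α * N) - 2 * ((1 - α) * N * (α^3 * N)) ≤ L)
    (hK : (α^3*N - 4) * (α^3*N - 5) ≤ K) (hK0 : (0:ℝ) ≤ K) :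
    α^12 * N^4 ≤ L * K := by
  have hαN : (0:ℝ) < α * N := mul_pos hα0 hN0
  have h2 : (2:ℝ) ≤ α * N / 20 := by nlinarith [sq_nonneg α]
  have hL1 : (33/40) * (α*N) * (α*N) ≤ ((1 - ε) * N - 2 - (1 - α) * N) * (α * N) := by
    have h1 : (33/40) * (α*N) ≤ (1 - ε) * N - 2 - (1 - α) * N := by nlinarith
    exact mul_le_mul_of_nonneg_right h1 hαN.le
  have hL2 : 2 * ((1 - α) * N * (α^3 * N)) ≤ (1/2) * (α*N) * (α*N) := by
    nlinarith [mul_pos hαN hαN, sq_nonneg (1 - 2*α), mul_pos hN0 hN0,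
      mul_nonneg (mul_nonneg hα0.le hα0.le) (mul_pos hN0 hN0).le]
  have hLlo : (1/4) * (α*N) * (α*N) ≤ L := by nlinarith [mul_pos hαN hαN]
  have hu : (40:ℝ) ≤ α^3*N := hn
  have hKlo : (1/2) * (α^3*N) * (α^3*N) ≤ K := by nlinarith
  have hL0 : (0:ℝ) ≤ (1/4) * (α*N) * (α*N) := by positivity
  have hmul : ((1/4) * (α*N) * (α*N)) * ((1/2) * (α^3*N) * (α^3*N)) ≤ L * K := by
    apply mul_le_mul hLlo hKlo (by positivity) (le_trans hL0 hLlo)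
  have hα4 : α^4 ≤ 1/16 := by
    have ha2 : α^2 ≤ 1/4 := by nlinarith
    have h3 := mul_le_mul ha2 ha2 (sq_nonneg α) (by norm_num : (0:ℝ) ≤ 1/4)
    nlinarith
  have hfin : α^12 * N^4 ≤ ((1/4) * (α*N) * (α*N)) * ((1/2) * (α^3*N) * (α^3*N)) := by
    have : α^12 * N^4 = (α^4) * (α^8 * N^4) := by ring
    have h8 : (0:ℝ) < α^8 * N^4 := by positivity
    calc α^12 * N^4 = (α^4) * (α^8 * N^4) := by ring
      _ ≤ (1/16) * (α^8 * N^4) := mul_le_mul_of_nonneg_right hα4 h8.le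
      _ ≤ (1/8) * (α^8 * N^4) := by nlinarith
      _ = ((1/4) * (α*N) * (α*N)) * ((1/2) * (α^3*N) * (α^3*N)) := by ring
  linarith

variable {V : Type} [Fintype V] [DecidableEq V] (E : V → V → Prop) [DecidableRel E]

noncomputable def pairsAux (x y : V) (p : V × V) : Finset (V × V) :=
  ((univ.filter fun a => E a x ∧ E a p.2 ∧ a ≠ x ∧ a ≠ y ∧ a ≠ p.2 ∧ a ≠ p.1) ×ˢ
   (univ.filter fun d => E p.1 d ∧ E y d ∧ d ≠ x ∧ d ≠ y ∧ d ≠ p.2 ∧ d ≠ p.1)).filter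
    (fun q => q.1 ≠ q.2)

lemma mem_pairsAux {x y : V} {p q : V × V} :
    q ∈ pairsAux E x y p ↔
      ((E q.1 x ∧ E q.1 p.2 ∧ q.1 ≠ x ∧ q.1 ≠ y ∧ q.1 ≠ p.2 ∧ q.1 ≠ p.1) ∧
       (E p.1 q.2 ∧ E y q.2 ∧ q.2 ≠ x ∧ q.2 ≠ y ∧ q.2 ≠ p.2 ∧ q.2 ≠ p.1) ∧
       q.1 ≠ q.2) := by
  simp only [pairsAux, Finset.mem_filter, Finset.mem_product, Finset.mem_univ, true_and]
  tauto

lemma card_quad_le {x y z w : V} : ({x, y, z, w} : Finset V).card ≤ 4 := by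
  apply le_trans (Finset.card_insert_le _ _)
  apply Nat.succ_le_succ
  apply le_trans (Finset.card_insert_le _ _)
  apply Nat.succ_le_succ
  apply le_trans (Finset.card_insert_le _ _)
  apply Nat.succ_le_succ
  simp

lemma main_count {α ε : ℝ} {n : ℕ}
    (hα0 : 0 < α) (hα2 : α ≤ 1/2) (hε0 : 0 < ε) (hε : ε ≤ α/8) (hn : 40 ≤ α^3 * n)
    (hcard : Nat.card V = 2 * n) (hloop : ∀ v, ¬ E v v)
    (hdeg : ∀ v, (1 - ε) * n ≤ (outDeg E v : ℝ) ∧ (1 - ε) * n ≤ (inDeg E v : ℝ))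
    (hne : ¬ AlphaExtremal α E) (x y : V) (hxy : x ≠ y) :
    α ^ 12 * (n : ℝ) ^ 4 ≤
        (({t : V × V × V × V | IsAbsorber E x y t.1 t.2.1 t.2.2.1 t.2.2.2}).ncard : ℝ) ∧
    α ^ 3 * (n : ℝ) ^ 2 ≤ (({p : V × V | IsConnector E x y p.1 p.2}).ncard : ℝ) := by
  have hn0 : (0:ℝ) < n := by nlinarith [pow_pos hα0 3]
  set A0 := univ.filter (fun w => E w x) with hA0def
  set B0 := univ.filter (fun w => E y w) with hB0def
  have hA0 : (1 - ε) * n ≤ (A0.card : ℝ) := by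
    have := (hdeg x).2
    rwa [inDeg, ncard_filter_eq (fun w => E w x)] at this
  have hB0 : (1 - ε) * n ≤ (B0.card : ℝ) := by
    have := (hdeg y).1
    rwa [outDeg, ncard_filter_eq (fun w => E y w)] at this
  set Fa := univ.filter (fun a => E a x ∧ a ≠ x ∧ a ≠ y) with hFadef
  set Fb := univ.filter (fun b => E y b ∧ b ≠ x ∧ b ≠ y) with hFbdef
  have hFaB : Fa ⊆ A0 := by
    intro a ha
    simp only [hFadef, hA0def, Finset.mem_filter, Finset.mem_univ, true_and] at *
    exact ha.1
  have hFbB : Fb ⊆ B0 := by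
    intro b hb
    simp only [hFbdef, hB0def, Finset.mem_filter, Finset.mem_univ, true_and] at *
    exact hb.1
  have hFa : (1 - ε) * n - 2 ≤ (Fa.card : ℝ) := by
    have hsub : A0 ⊆ Fa ∪ {x, y} := by
      intro a ha
      simp only [hA0def, Finset.mem_filter, Finset.mem_univ, true_and] at ha
      by_cases h1 : a = x
      · simp [h1]
      by_cases h2 : a = y
      · simp [h2]
      · simp only [hFadef, Finset.mem_union, Finset.mem_filter, Finset.mem_univ, true_and]
        exact Or.inl ⟨ha, h1, h2⟩
    have h1 : A0.card ≤ Fa.card + 2 := by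
      calc A0.card ≤ (Fa ∪ {x, y}).card := Finset.card_le_card hsub
        _ ≤ Fa.card + ({x, y} : Finset V).card := Finset.card_union_le _ _
        _ ≤ Fa.card + 2 := by
            have : ({x, y} : Finset V).card ≤ 2 := Finset.card_insert_le _ _ |>.trans (by simp)
            omega
    have : (A0.card : ℝ) ≤ (Fa.card : ℝ) + 2 := by exact_mod_cast h1
    linarith
  have hFb : (1 - ε) * n - 2 ≤ (Fb.card : ℝ) := by
    have hsub : B0 ⊆ Fb ∪ {x, y} := by
      intro a ha
      simp only [hB0def, Finset.mem_filter, Finset.mem_univ, true_and] at ha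
      by_cases h1 : a = x
      · simp [h1]
      by_cases h2 : a = y
      · simp [h2]
      · simp only [hFbdef, Finset.mem_union, Finset.mem_filter, Finset.mem_univ, true_and]
        exact Or.inl ⟨ha, h1, h2⟩
    have h1 : B0.card ≤ Fb.card + 2 := by
      calc B0.card ≤ (Fb ∪ {x, y}).card := Finset.card_le_card hsub
        _ ≤ Fb.card + ({x, y} : Finset V).card := Finset.card_union_le _ _
        _ ≤ Fb.card + 2 := by
            have : ({x, y} : Finset V).card ≤ 2 := Finset.card_insert_le _ _ |>.trans (by simp)
            omega
    have : (B0.card : ℝ) ≤ (Fb.card : ℝ) + 2 := by exact_mod_cast h1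
    linarith
  set Ed := ((Fa ×ˢ Fb).filter fun p => E p.1 p.2) with hEddef
  have hEdlo : ((1 - ε) * n - 2 - (1 - α) * n) * (α * n) ≤ (Ed.card : ℝ) :=
    many_edges E hα0 hcard hne Fa Fb _ hFa hFb
  -- connectors
  have hconn : α ^ 3 * (n:ℝ) ^ 2 ≤ (({p : V × V | IsConnector E x y p.1 p.2}).ncard : ℝ) := by
    have hsub : (↑Ed : Set (V × V)) ⊆ {p : V × V | IsConnector E x y p.1 p.2} := by
      intro p hp
      simp only [Finset.coe_filter, hEddef, Set.mem_setOf_eq, Finset.mem_product] at hp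
      obtain ⟨⟨hpa, hpb⟩, hpe⟩ := hp
      simp only [hFadef, hFbdef, Finset.mem_filter, Finset.mem_univ, true_and] at hpa hpb
      obtain ⟨hax, haxne, hayne⟩ := hpa
      obtain ⟨hyb, hbxne, hbyne⟩ := hpb
      have habne : p.1 ≠ p.2 := by
        intro h; exact hloop p.2 (h ▸ hpe)
      refine ⟨pairwise4 habne haxne hayne hbxne hbyne hxy, hax, hpe, hyb⟩
    have h1 : (Ed.card : ℕ) ≤ ({p : V × V | IsConnector E x y p.1 p.2}).ncard := by
      rw [← Set.ncard_coe_finset Ed]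
      exact Set.ncard_le_ncard hsub (Set.toFinite _)
    have h2 : ((Ed.card : ℕ) : ℝ) ≤ (({p : V × V | IsConnector E x y p.1 p.2}).ncard : ℝ) := by
      exact_mod_cast h1
    have := conn_arith hα0 hα2 hε hn hn0
    linarith
  refine ⟨?_, hconn⟩
  -- absorbers
  haveI hflipinst : DecidableRel (fun a b : V => E b a) := fun a b =>
    (inferInstance : Decidable (E b a))
  have hBadCex : ∃ S : Finset V, ((S.card : ℝ) < (1 - α) * n ∧
      ∀ c, c ∈ S ↔ ((B0.filter fun b => E c b).card : ℝ) ≤ α^3 * n) := by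
    refine ⟨_, few_bad E hα0 hα2 hε0.le hε hn hcard hne B0 hB0, ?_⟩
    intro c
    simp only [Finset.mem_filter, Finset.mem_univ, true_and]
  have hneflip : ¬ AlphaExtremal α (fun a b => E b a) := fun h => hne (extremal_flip E h)
  have hBadBex : ∃ S : Finset V, ((S.card : ℝ) < (1 - α) * n ∧
      ∀ c, c ∈ S ↔ ((A0.filter fun a => E a c).card : ℝ) ≤ α^3 * n) := by
    refine ⟨_, few_bad (fun a b => E b a) hα0 hα2 hε0.le hε hn hcard hneflip A0 hA0, ?_⟩
    intro c
    simp only [Finset.mem_filter, Finset.mem_univ, true_and]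
  obtain ⟨BadC, hBadCcard, hBadCmem⟩ := hBadCex
  obtain ⟨BadB, hBadBcard, hBadBmem⟩ := hBadBex
  set GoodEd := Ed.filter (fun p => p.1 ∉ BadC ∧ p.2 ∉ BadB) with hGdef
  set Ed1 := (((Fa ∩ BadC) ×ˢ Fb).filter fun p => E p.1 p.2) with hEd1def
  set Ed2 := ((Fa ×ˢ (Fb ∩ BadB)).filter fun p => E p.1 p.2) with hEd2def
  have hsplit : Ed ⊆ GoodEd ∪ Ed1 ∪ Ed2 := by
    intro p hp
    have hp' := hp
    simp only [hEddef, Finset.mem_filter, Finset.mem_product] at hp'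
    obtain ⟨⟨h1, h2⟩, h3⟩ := hp'
    simp only [Finset.mem_union, hGdef, hEd1def, hEd2def, Finset.mem_filter,
      Finset.mem_product, Finset.mem_inter]
    by_cases hc : p.1 ∈ BadC
    · exact Or.inl (Or.inr ⟨⟨⟨h1, hc⟩, h2⟩, h3⟩)
    by_cases hb : p.2 ∈ BadB
    · exact Or.inr ⟨⟨h1, h2, hb⟩, h3⟩
    · exact Or.inl (Or.inl ⟨hp, hc, hb⟩)
  have hα3n0 : (0:ℝ) ≤ α^3 * n := by positivity
  have hEd1up : (Ed1.card : ℝ) ≤ (1 - α) * n * (α^3 * n) := by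
    have heq : Ed1.card = ∑ a ∈ Fa ∩ BadC, (Fb.filter fun b => E a b).card :=
      edge_sum_fst E _ _
    have hstep : (Ed1.card : ℝ) ≤ ((Fa ∩ BadC).card : ℝ) * (α^3 * n) := by
      rw [heq]
      apply sum_card_upper
      intro a ha
      have haC : a ∈ BadC := (Finset.mem_inter.mp ha).2
      have h2 : ((Fb.filter fun b => E a b).card : ℝ) ≤ ((B0.filter fun b => E a b).card : ℝ) := by
        exact_mod_cast Finset.card_le_card (Finset.filter_subset_filter _ hFbB)
      exact h2.trans ((hBadCmem a).mp haC)
    refine hstep.trans ?_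
    apply mul_le_mul_of_nonneg_right _ hα3n0
    have : ((Fa ∩ BadC).card : ℝ) ≤ (BadC.card : ℝ) := by
      exact_mod_cast Finset.card_le_card (Finset.inter_subset_right)
    linarith
  have hEd2up : (Ed2.card : ℝ) ≤ (1 - α) * n * (α^3 * n) := by
    have heq : Ed2.card = ∑ b ∈ Fb ∩ BadB, (Fa.filter fun a => E a b).card :=
      edge_sum_snd E _ _
    have hstep : (Ed2.card : ℝ) ≤ ((Fb ∩ BadB).card : ℝ) * (α^3 * n) := by
      rw [heq]
      apply sum_card_upper
      intro b hb
      have hbB : b ∈ BadB := (Finset.mem_inter.mp hb).2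
      have h2 : ((Fa.filter fun a => E a b).card : ℝ) ≤ ((A0.filter fun a => E a b).card : ℝ) := by
        exact_mod_cast Finset.card_le_card (Finset.filter_subset_filter _ hFaB)
      exact h2.trans ((hBadBmem b).mp hbB)
    refine hstep.trans ?_
    apply mul_le_mul_of_nonneg_right _ hα3n0
    have : ((Fb ∩ BadB).card : ℝ) ≤ (BadB.card : ℝ) := by
      exact_mod_cast Finset.card_le_card (Finset.inter_subset_right)
    linarith
  have hGood : ((1 - ε) * n - 2 - (1 - α) * n) * (α * n) - 2 * ((1 - α) * n * (α^3 * n))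
      ≤ (GoodEd.card : ℝ) := by
    have h1 : Ed.card ≤ GoodEd.card + Ed1.card + Ed2.card := by
      calc Ed.card ≤ (GoodEd ∪ Ed1 ∪ Ed2).card := Finset.card_le_card hsplit
        _ ≤ (GoodEd ∪ Ed1).card + Ed2.card := Finset.card_union_le _ _
        _ ≤ GoodEd.card + Ed1.card + Ed2.card := by
            have := Finset.card_union_le GoodEd Ed1
            omega
    have h1' : (Ed.card : ℝ) ≤ (GoodEd.card : ℝ) + Ed1.card + Ed2.card := by exact_mod_cast h1
    linarith
  -- per-edge pair counts
  have hpair : ∀ p ∈ GoodEd, (α^3*n - 4) * (α^3*n - 5) ≤ ((pairsAux E x y p).card : ℝ) := by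
    intro p hp
    simp only [hGdef, Finset.mem_filter] at hp
    obtain ⟨hpEd, hc, hb⟩ := hp
    have hPaFull : α^3*n < ((A0.filter fun a => E a p.2).card : ℝ) := by
      have := (not_iff_not.mpr (hBadBmem p.2)).mp hb
      push_neg at this
      exact this
    have hQdFull : α^3*n < ((B0.filter fun b => E p.1 b).card : ℝ) := by
      have := (not_iff_not.mpr (hBadCmem p.1)).mp hc
      push_neg at this
      exact this
    set Pa := univ.filter fun a => E a x ∧ E a p.2 ∧ a ≠ x ∧ a ≠ y ∧ a ≠ p.2 ∧ a ≠ p.1 with hPadef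
    set Qd := univ.filter fun d => E p.1 d ∧ E y d ∧ d ≠ x ∧ d ≠ y ∧ d ≠ p.2 ∧ d ≠ p.1 with hQddef
    have hPasub : (A0.filter fun a => E a p.2) \ {x, y, p.2, p.1} ⊆ Pa := by
      intro a ha
      simp only [Finset.mem_sdiff, Finset.mem_filter, hA0def, Finset.mem_univ, true_and,
        Finset.mem_insert, Finset.mem_singleton, not_or, hPadef] at ha ⊢
      tauto
    have hQdsub : (B0.filter fun b => E p.1 b) \ {x, y, p.2, p.1} ⊆ Qd := by
      intro d hd
      simp only [Finset.mem_sdiff, Finset.mem_filter, hB0def, Finset.mem_univ, true_and,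
        Finset.mem_insert, Finset.mem_singleton, not_or, hQddef] at hd ⊢
      tauto
    have hPa : α^3*n - 4 ≤ (Pa.card : ℝ) := by
      have h1 : (A0.filter fun a => E a p.2).card
          ≤ ((A0.filter fun a => E a p.2) \ {x, y, p.2, p.1}).card + 4 := by
        have := Finset.card_le_card_sdiff_add_card
          (s := A0.filter fun a => E a p.2) (t := {x, y, p.2, p.1})
        have h4 : ({x, y, p.2, p.1} : Finset V).card ≤ 4 := card_quad_le
        omega
      have h2 := Finset.card_le_card hPasub
      have h3 : ((A0.filter fun a => E a p.2).card : ℝ) ≤ (Pa.card : ℝ) + 4 := by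
        exact_mod_cast h1.trans (by omega)
      linarith
    have hQd : α^3*n - 4 ≤ (Qd.card : ℝ) := by
      have h1 : (B0.filter fun b => E p.1 b).card
          ≤ ((B0.filter fun b => E p.1 b) \ {x, y, p.2, p.1}).card + 4 := by
        have := Finset.card_le_card_sdiff_add_card
          (s := B0.filter fun b => E p.1 b) (t := {x, y, p.2, p.1})
        have h4 : ({x, y, p.2, p.1} : Finset V).card ≤ 4 := card_quad_le
        omega
      have h2 := Finset.card_le_card hQdsub
      have h3 : ((B0.filter fun b => E p.1 b).card : ℝ) ≤ (Qd.card : ℝ) + 4 := by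
        exact_mod_cast h1.trans (by omega)
      linarith
    have hprod : (Pa ×ˢ Qd).card = Pa.card * Qd.card := Finset.card_product _ _
    have hfilt := Finset.card_filter_add_card_filter_not
      (s := Pa ×ˢ Qd) (p := fun q : V × V => q.1 ≠ q.2)
    have hdiag : ((Pa ×ˢ Qd).filter fun q : V × V => ¬ q.1 ≠ q.2).card ≤ Pa.card := by
      apply Finset.card_le_card_of_injOn (fun q => q.1)
      · intro q hq
        simp only [Finset.mem_coe, Finset.mem_filter, Finset.mem_product] at hq
        exact hq.1.1
      · intro q hq q' hq' hqq
        simp only [Finset.coe_filter, Set.mem_setOf_eq, Finset.mem_product, not_not] at hq hq'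
        have hqq' : q.1 = q'.1 := hqq
        have : q.2 = q'.2 := by rw [← hq.2, ← hq'.2, hqq']
        exact Prod.ext hqq' this
    have hple : Pa.card * Qd.card ≤ (pairsAux E x y p).card + Pa.card := by
      have : (pairsAux E x y p).card
          = ((Pa ×ˢ Qd).filter fun q : V × V => q.1 ≠ q.2).card := by
        rw [hPadef, hQddef]; rfl
      omega
    have hple' : (Pa.card : ℝ) * Qd.card ≤ ((pairsAux E x y p).card : ℝ) + Pa.card := by
      exact_mod_cast hple
    have h40 : (40:ℝ) ≤ α^3*n := hn
    have hmm : (α^3*n - 4) * (α^3*n - 5) ≤ (Pa.card : ℝ) * ((Qd.card : ℝ) - 1) := by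
      apply mul_le_mul hPa (by linarith) (by linarith) (by linarith)
    have hx : (Pa.card : ℝ) * ((Qd.card : ℝ) - 1) = (Pa.card : ℝ) * Qd.card - Pa.card := by
      ring
    linarith
  set big := GoodEd.biUnion (fun p => (pairsAux E x y p).image fun q => (q.1, p.2, p.1, q.2))
    with hbigdef
  have hbigcard : big.card = ∑ p ∈ GoodEd, (pairsAux E x y p).card := by
    rw [hbigdef, Finset.card_biUnion]
    · refine Finset.sum_congr rfl fun p _ => Finset.card_image_of_injective _ ?_
      intro q q' h
      simp only [Prod.mk.injEq] at h
      exact Prod.ext h.1 h.2.2.2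
    · intro p hp p' hp' hpp
      rw [Function.onFun, Finset.disjoint_left]
      intro z hz hz'
      simp only [Finset.mem_image] at hz hz'
      obtain ⟨q, hq, rfl⟩ := hz
      obtain ⟨q', hq', heq⟩ := hz'
      apply hpp
      simp only [Prod.mk.injEq] at heq
      exact Prod.ext heq.2.2.1.symm heq.2.1.symm
  have hbigsub : (↑big : Set (V × V × V × V))
      ⊆ {t : V × V × V × V | IsAbsorber E x y t.1 t.2.1 t.2.2.1 t.2.2.2} := by
    intro t ht
    rw [Finset.mem_coe, hbigdef, Finset.mem_biUnion] at ht
    obtain ⟨p, hp, ht⟩ := ht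
    rw [Finset.mem_image] at ht
    obtain ⟨q, hq, rfl⟩ := ht
    rw [mem_pairsAux] at hq
    obtain ⟨⟨hax, hab, haxne, hayne, habne, hacne⟩,
      ⟨hcd, hyd, hdxne, hdyne, hdbne, hdcne⟩, hadne⟩ := hq
    simp only [hGdef, Finset.mem_filter] at hp
    have hpEd := hp.1
    simp only [hEddef, Finset.mem_filter, Finset.mem_product] at hpEd
    obtain ⟨⟨hp1, hp2⟩, hcb⟩ := hpEd
    simp only [hFadef, Finset.mem_filter, Finset.mem_univ, true_and] at hp1
    simp only [hFbdef, Finset.mem_filter, Finset.mem_univ, true_and] at hp2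
    obtain ⟨hcx, hcxne, hcyne⟩ := hp1
    obtain ⟨hyb, hbxne, hbyne⟩ := hp2
    have hbcne : p.2 ≠ p.1 := fun h => hloop p.2 (h ▸ hcb)
    exact ⟨pairwise6 habne hacne hadne haxne hayne hbcne hdbne.symm hbxne hbyne
      hdcne.symm hcxne hcyne hdxne hdyne hxy, hab, hcb, hcd, hax, hcx, hyb, hyd⟩
  have habs1 : big.card ≤ ({t : V × V × V × V |
      IsAbsorber E x y t.1 t.2.1 t.2.2.1 t.2.2.2}).ncard := by
    rw [← Set.ncard_coe_finset big]
    exact Set.ncard_le_ncard hbigsub (Set.toFinite _)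
  have hbiglo : (GoodEd.card : ℝ) * ((α^3*n - 4) * (α^3*n - 5)) ≤ (big.card : ℝ) := by
    rw [hbigcard]
    exact sum_card_lower _ _ _ hpair
  have hK0 : (0:ℝ) ≤ (α^3*n - 4) * (α^3*n - 5) := by
    have h40 : (40:ℝ) ≤ α^3*n := hn
    nlinarith [h40]
  have hfinal := abs_arith (L := (GoodEd.card : ℝ)) (K := (α^3*n - 4) * (α^3*n - 5))
    hα0 hα2 hε hn hn0 hGood le_rfl hK0
  have hcast : ((big.card : ℕ) : ℝ) ≤ (({t : V × V × V × V |
      IsAbsorber E x y t.1 t.2.1 t.2.2.1 t.2.2.2}).ncard : ℝ) := by exact_mod_cast habs1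
  linarith

end Aux3

theorem statement13 (α : ℝ) (hα0 : 0 < α) (hα : α < 1) :
    ∃ ε₀ : ℝ, 0 < ε₀ ∧ ∃ n₀ : ℕ, ∀ ε : ℝ, 0 < ε → ε ≤ ε₀ →
      ∀ n : ℕ, n₀ ≤ n → ∀ (V : Type) (E : V → V → Prop),
        Nat.card V = 2 * n → (∀ v, ¬ E v v) →
        (∀ v, (1 - ε) * n ≤ (outDeg E v : ℝ) ∧ (1 - ε) * n ≤ (inDeg E v : ℝ)) →
        ¬ AlphaExtremal α E →
        ∀ x y : V, x ≠ y →
          α ^ 12 * (n : ℝ) ^ 4 ≤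
            (({t : V × V × V × V |
                IsAbsorber E x y t.1 t.2.1 t.2.2.1 t.2.2.2}).ncard : ℝ) ∧
          α ^ 3 * (n : ℝ) ^ 2 ≤
            (({p : V × V | IsConnector E x y p.1 p.2}).ncard : ℝ) := by
  by_cases hhalf : α ≤ 1/2
  · refine ⟨α/8, by positivity, ⌈(40:ℝ)/α^3⌉₊, ?_⟩
    intro ε hε0 hε n hn V E hcard hloop hdeg hne x y hxy
    have hα3 : (0:ℝ) < α^3 := by positivity
    have hn' : (40:ℝ)/α^3 ≤ n := Nat.ceil_le.mp hn
    have h40 : (40:ℝ) ≤ α^3 * n := by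
      have := (div_le_iff₀ hα3).mp hn'
      linarith
    have hnR : (0:ℝ) < n := by nlinarith
    have hnpos : 0 < n := by
      by_contra h
      push_neg at h
      interval_cases n
      · norm_num at hnR
    have hnne : Nat.card V ≠ 0 := by
      rw [hcard]; omega
    haveI : Finite V := Nat.finite_of_card_ne_zero hnne
    haveI := Fintype.ofFinite V
    haveI : DecidableEq V := Classical.decEq V
    haveI : DecidableRel E := fun a b => Classical.dec _
    exact main_count E hα0 hhalf hε0 hε h40 hcard hloop hdeg hne x y hxy
  · push_neg at hhalf
    refine ⟨1, one_pos, ⌈(1:ℝ)/(2*α-1)⌉₊ + 1, ?_⟩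
    intro ε hε0 hε n hn V E hcard hloop hdeg hne x y hxy
    exfalso
    have h2α : (0:ℝ) < 2*α - 1 := by linarith
    have hn1 : 1 ≤ n := le_trans (Nat.le_add_left 1 _) hn
    have hn' : (1:ℝ)/(2*α-1) ≤ n := by
      have h1 : (⌈(1:ℝ)/(2*α-1)⌉₊ : ℝ) ≤ n := by
        exact_mod_cast le_trans (Nat.le_add_right _ 1) hn
      exact le_trans (Nat.le_ceil _) h1
    have hkey : 1 ≤ (2*α - 1) * n := by
      have := (div_le_iff₀ h2α).mp hn'
      linarith
    have hnne : Nat.card V ≠ 0 := by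
      rw [hcard]; omega
    haveI : Finite V := Nat.finite_of_card_ne_zero hnne
    haveI := Fintype.ofFinite V
    haveI : DecidableEq V := Classical.decEq V
    haveI : DecidableRel E := fun a b => Classical.dec _
    exact hne (always_extremal E hhalf hα hcard hkey)
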